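/- Strongly convex one-step contraction. Let S ≥ 1, μ > 0, L > 0, and let f_1, …, f_S : ℝ^d → ℝ each be differentiable with L-Lipschitz gradient and μ-strongly convex. Let 0 < η ≤ min{1/(2μ), 1/(2L)}, let λ ∈ Δ_S, let u_1, …, u_S ∈ ℝ^d, set d := Σ_{s=1}^S λ_s·u_s, let x, x* ∈ ℝ^d and x' := x − η·d, and assume Σ_{s=1}^S λ_s·(f_s(x') − f_s(x*)) ≥ 0. Then ‖x' − x*‖² ≤ (1 − 3μη/4)·‖x − x*‖² + (8η/μ)·Σ_{s=1}^S λ_s·‖∇f_s(x) − u_s‖². -/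

import Mathlib

open scoped RealInnerProductSpace BigOperators

private lemma stimulus_key_arith (μ L η r D e E N : ℝ) (hμ : 0 < μ) (hη0 : 0 < η)
    (hLη : L * η ≤ 1 / 2) (hD0 : 0 ≤ D) (hr0 : 0 ≤ r) (he0 : 0 ≤ e) (hE : e ^ 2 ≤ E)
    (hN : N ≤ r ^ 2 - 2 * η * (η * D ^ 2 - η * (e * D) - L * η ^ 2 * D ^ 2
      + μ / 2 * η ^ 2 * D ^ 2 + μ / 2 * r ^ 2 - e * r) + η ^ 2 * D ^ 2) :
    N ≤ (1 - 3 * μ * η / 4) * r ^ 2 + (8 * η / μ) * E := by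
  have hY1 : 2 * μ * η * e * r ≤ η * (μ ^ 2 * r ^ 2 / 7) + 7 * η * e ^ 2 := by
    nlinarith [mul_nonneg hη0.le (sq_nonneg (μ * r - 7 * e))]
  have hY2 : 2 * μ * η ^ 2 * e * D ≤ μ ^ 2 * η ^ 3 * D ^ 2 + η * e ^ 2 := by
    nlinarith [mul_nonneg hη0.le (sq_nonneg (μ * η * D - e))]
  have hY3 : 2 * L * μ * η ^ 3 * D ^ 2 ≤ μ * η ^ 2 * D ^ 2 := by
    nlinarith [mul_nonneg (mul_nonneg (mul_nonneg hμ.le (sq_nonneg η)) (sq_nonneg D))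
      (by linarith : (0:ℝ) ≤ 1 - 2 * L * η)]
  have hY4 : 8 * η * e ^ 2 ≤ 8 * η * E := by nlinarith [hE, hη0.le]
  have hmain : μ * N ≤ μ * ((1 - 3 * μ * η / 4) * r ^ 2) + 8 * η * E := by
    linarith [mul_le_mul_of_nonneg_left hN hμ.le, hY1, hY2, hY3, hY4,
      mul_nonneg (mul_nonneg (mul_nonneg hμ.le hμ.le) hη0.le) (sq_nonneg r)]
  have hdiv : μ * (8 * η / μ * E) = 8 * η * E := by field_simp
  rw [← mul_le_mul_iff_right₀ hμ, mul_add, hdiv]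
  linarith [hmain]

set_option maxHeartbeats 2000000 in
/-- Strongly convex one-step contraction for STIMULUS (intermediate claim in Theorem 2). -/
theorem stimulus_strongly_convex_contraction {d : ℕ} (S : ℕ) (hS : 1 ≤ S) (μ L η : ℝ)
    (hμ : 0 < μ) (hL : 0 < L) (hη0 : 0 < η) (hη : η ≤ min (1 / (2 * μ)) (1 / (2 * L)))
    (f : Fin S → EuclideanSpace ℝ (Fin d) → ℝ)
    (hdiff : ∀ s, Differentiable ℝ (f s))
    (hlip : ∀ s, ∀ x y : EuclideanSpace ℝ (Fin d),
      ‖gradient (f s) x - gradient (f s) y‖ ≤ L * ‖x - y‖)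
    (hsc : ∀ s, ∀ x y : EuclideanSpace ℝ (Fin d),
      f s y ≥ f s x + ⟪gradient (f s) x, y - x⟫ + (μ / 2) * ‖y - x‖ ^ 2)
    (lam : Fin S → ℝ) (hlam_nonneg : ∀ s, 0 ≤ lam s) (hlam_sum : ∑ s : Fin S, lam s = 1)
    (u : Fin S → EuclideanSpace ℝ (Fin d))
    (dvec : EuclideanSpace ℝ (Fin d)) (hdvec : dvec = ∑ s : Fin S, lam s • u s)
    (x xstar x' : EuclideanSpace ℝ (Fin d)) (hx' : x' = x - η • dvec)
    (hnonneg : 0 ≤ ∑ s : Fin S, lam s * (f s x' - f s xstar)) :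
    ‖x' - xstar‖ ^ 2 ≤ (1 - 3 * μ * η / 4) * ‖x - xstar‖ ^ 2
      + (8 * η / μ) * ∑ s : Fin S, lam s * ‖gradient (f s) x - u s‖ ^ 2 := by
  -- step-size bounds
  have hη1 : η ≤ 1 / (2 * μ) := hη.trans (min_le_left _ _)
  have hη2 : η ≤ 1 / (2 * L) := hη.trans (min_le_right _ _)
  have hμη : μ * η ≤ 1 / 2 := by
    rw [le_div_iff₀ (by positivity)] at hη1; linarith
  have hLη : L * η ≤ 1 / 2 := by
    rw [le_div_iff₀ (by positivity)] at hη2; linarith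
  set gs : Fin S → EuclideanSpace ℝ (Fin d) := fun s => gradient (f s) x with hgs
  set hs : Fin S → EuclideanSpace ℝ (Fin d) := fun s => gradient (f s) x' with hhs
  set g : EuclideanSpace ℝ (Fin d) := ∑ s : Fin S, lam s • gs s with hg
  set hvec : EuclideanSpace ℝ (Fin d) := ∑ s : Fin S, lam s • hs s with hh
  set r : ℝ := ‖x - xstar‖ with hr
  set D : ℝ := ‖dvec‖ with hD
  set eps : ℝ := ‖g - dvec‖ with heps
  set Eerr : ℝ := ∑ s : Fin S, lam s * ‖gs s - u s‖ ^ 2 with hEerr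
  have hr0 : 0 ≤ r := norm_nonneg _
  have hD0 : 0 ≤ D := norm_nonneg _
  have heps0 : 0 ≤ eps := norm_nonneg _
  -- basic vector identities
  have hxx'v : x - x' = η • dvec := by rw [hx', sub_sub_cancel]
  have hx'xs : x' - xstar = (x - xstar) - η • dvec := by
    rw [hx']; exact sub_right_comm x (η • dvec) xstar
  have hxx'norm : ‖x - x'‖ = η * D := by
    rw [hxx'v, norm_smul, Real.norm_eq_abs, abs_of_pos hη0]
  -- expansion of the squared norm
  have eq1 : ‖x' - xstar‖ ^ 2 = r ^ 2 - 2 * η * ⟪x - xstar, dvec⟫ + η ^ 2 * D ^ 2 := by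
    rw [hx'xs, norm_sub_sq_real, real_inner_smul_right, norm_smul, Real.norm_eq_abs,
      abs_of_pos hη0, mul_pow]
    ring
  set T : ℝ := ⟪x - xstar, dvec⟫ with hT
  set Q : ℝ := ⟪hvec, dvec⟫ with hQ
  set G2 : ℝ := ⟪g, dvec⟫ with hG2
  set Fx : ℝ := ∑ s : Fin S, lam s * f s x with hFx
  set Fx' : ℝ := ∑ s : Fin S, lam s * f s x' with hFx'
  set Fstar : ℝ := ∑ s : Fin S, lam s * f s xstar with hFstar
  -- A4 : Fstar ≤ Fx'
  have hA4 : Fstar ≤ Fx' := by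
    have : (0:ℝ) ≤ ∑ s : Fin S, (lam s * f s x' - lam s * f s xstar) := by
      simpa [mul_sub] using hnonneg
    rw [Finset.sum_sub_distrib] at this
    simp only [hFx', hFstar]
    linarith
  -- A2 : strong convexity at x versus xstar
  have hA2 : Fx - Fstar + μ / 2 * r ^ 2 ≤ ⟪g, x - xstar⟫ := by
    have hsum : ⟪g, x - xstar⟫ = ∑ s : Fin S, lam s * ⟪gs s, x - xstar⟫ := by
      rw [hg, sum_inner]
      exact Finset.sum_congr rfl fun s _ => real_inner_smul_left _ _ _
    have hpt : ∀ s : Fin S, lam s * (f s x - f s xstar + μ / 2 * r ^ 2)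
        ≤ lam s * ⟪gs s, x - xstar⟫ := by
      intro s
      refine mul_le_mul_of_nonneg_left ?_ (hlam_nonneg s)
      have h1 := hsc s x xstar
      have h2 : ⟪gradient (f s) x, xstar - x⟫ = -⟪gs s, x - xstar⟫ := by
        rw [show xstar - x = -(x - xstar) by abel, inner_neg_right]
      have h3 : ‖xstar - x‖ = r := by rw [norm_sub_rev]
      rw [h2, h3] at h1
      linarith
    have := Finset.sum_le_sum (s := Finset.univ) (fun s _ => hpt s)
    rw [← hsum] at this
    calc Fx - Fstar + μ / 2 * r ^ 2
        = ∑ s : Fin S, lam s * (f s x - f s xstar + μ / 2 * r ^ 2) := by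
          simp only [mul_add, mul_sub, Finset.sum_add_distrib, Finset.sum_sub_distrib,
            ← Finset.sum_mul, hlam_sum, hFx, hFstar]
          ring
      _ ≤ ⟪g, x - xstar⟫ := this
  -- A3 : strong convexity at x' versus x
  have hA3 : Fx' + η * Q + μ / 2 * η ^ 2 * D ^ 2 ≤ Fx := by
    have hsum : Q = ∑ s : Fin S, lam s * ⟪hs s, dvec⟫ := by
      rw [hQ, hh, sum_inner]
      exact Finset.sum_congr rfl fun s _ => real_inner_smul_left _ _ _
    have hpt : ∀ s : Fin S, lam s * (f s x' + η * ⟪hs s, dvec⟫ + μ / 2 * η ^ 2 * D ^ 2)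
        ≤ lam s * f s x := by
      intro s
      refine mul_le_mul_of_nonneg_left ?_ (hlam_nonneg s)
      have h1 := hsc s x' x
      have h2 : ⟪gradient (f s) x', x - x'⟫ = η * ⟪hs s, dvec⟫ := by
        rw [hxx'v, real_inner_smul_right]
      have h3 : ‖x - x'‖ ^ 2 = η ^ 2 * D ^ 2 := by rw [hxx'norm]; ring
      rw [h2, h3] at h1
      linarith
    have := Finset.sum_le_sum (s := Finset.univ) (fun s _ => hpt s)
    have e2 : ∑ s : Fin S, lam s * (η * ⟪hs s, dvec⟫) = η * Q := by
      rw [hsum, Finset.mul_sum]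
      exact Finset.sum_congr rfl fun s _ => by ring
    have e3 : ∑ s : Fin S, lam s * (μ / 2 * η ^ 2 * D ^ 2) = μ / 2 * η ^ 2 * D ^ 2 := by
      rw [← Finset.sum_mul, hlam_sum, one_mul]
    calc Fx' + η * Q + μ / 2 * η ^ 2 * D ^ 2
        = ∑ s : Fin S, lam s * (f s x' + η * ⟪hs s, dvec⟫ + μ / 2 * η ^ 2 * D ^ 2) := by
          simp only [mul_add, Finset.sum_add_distrib, e2, e3, hFx']
      _ ≤ Fx := this
  -- A5 : G2 - Q ≤ L * η * D^2
  have hA5 : G2 - Q ≤ L * η * D ^ 2 := by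
    have hgh : g - hvec = ∑ s : Fin S, lam s • (gs s - hs s) := by
      rw [hg, hh, ← Finset.sum_sub_distrib]
      exact Finset.sum_congr rfl fun s _ => (smul_sub _ _ _).symm
    have hnormgh : ‖g - hvec‖ ≤ L * η * D := by
      rw [hgh]
      calc ‖∑ s : Fin S, lam s • (gs s - hs s)‖
          ≤ ∑ s : Fin S, ‖lam s • (gs s - hs s)‖ := norm_sum_le _ _
        _ = ∑ s : Fin S, lam s * ‖gs s - hs s‖ := by
            exact Finset.sum_congr rfl fun s _ => by
              rw [norm_smul, Real.norm_eq_abs, abs_of_nonneg (hlam_nonneg s)]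
        _ ≤ ∑ s : Fin S, lam s * (L * (η * D)) := by
            refine Finset.sum_le_sum fun s _ => ?_
            refine mul_le_mul_of_nonneg_left ?_ (hlam_nonneg s)
            have := hlip s x x'
            rw [hxx'norm] at this
            simpa [mul_assoc] using this
        _ = L * η * D := by rw [← Finset.sum_mul, hlam_sum]; ring
    have h1 : G2 - Q = ⟪g - hvec, dvec⟫ := by rw [hG2, hQ, inner_sub_left]
    have h2 : ⟪g - hvec, dvec⟫ ≤ ‖g - hvec‖ * D := real_inner_le_norm _ _
    have h3 : ‖g - hvec‖ * D ≤ (L * η * D) * D :=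
      mul_le_mul_of_nonneg_right hnormgh hD0
    rw [h1]
    calc ⟪g - hvec, dvec⟫ ≤ (L * η * D) * D := h2.trans h3
      _ = L * η * D ^ 2 := by ring
  -- A6 : D^2 - eps * D ≤ G2
  have hA6 : D ^ 2 - eps * D ≤ G2 := by
    have h1 : D ^ 2 - G2 = ⟪dvec - g, dvec⟫ := by
      rw [inner_sub_left, real_inner_self_eq_norm_sq, hG2]
    have h2 : ⟪dvec - g, dvec⟫ ≤ ‖dvec - g‖ * D := real_inner_le_norm _ _
    have h3 : ‖dvec - g‖ = eps := by rw [heps, norm_sub_rev]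
    rw [h3] at h2
    linarith [h1, h2]
  -- A7 : ⟪g, x - xstar⟫ - T ≤ eps * r
  have hA7 : ⟪g, x - xstar⟫ - T ≤ eps * r := by
    have e : ⟪g - dvec, x - xstar⟫ = ⟪g, x - xstar⟫ - ⟪dvec, x - xstar⟫ :=
      inner_sub_left g dvec (x - xstar)
    have e2 : T = ⟪dvec, x - xstar⟫ := hT.trans (real_inner_comm _ _)
    have h2 : ⟪g - dvec, x - xstar⟫ ≤ eps * r := real_inner_le_norm _ _
    linarith
  -- A8 : eps^2 ≤ Eerr
  have hA8 : eps ^ 2 ≤ Eerr := by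
    have hgd : g - dvec = ∑ s : Fin S, lam s • (gs s - u s) := by
      rw [hg, hdvec, ← Finset.sum_sub_distrib]
      exact Finset.sum_congr rfl fun s _ => (smul_sub _ _ _).symm
    have hB : eps ≤ ∑ s : Fin S, lam s * ‖gs s - u s‖ := by
      rw [heps, hgd]
      calc ‖∑ s : Fin S, lam s • (gs s - u s)‖
          ≤ ∑ s : Fin S, ‖lam s • (gs s - u s)‖ := norm_sum_le _ _
        _ = ∑ s : Fin S, lam s * ‖gs s - u s‖ := Finset.sum_congr rfl fun s _ => by
              rw [norm_smul, Real.norm_eq_abs, abs_of_nonneg (hlam_nonneg s)]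
    have hCS : (∑ s : Fin S, lam s * ‖gs s - u s‖) ^ 2 ≤ Eerr := by
      have := Finset.sum_mul_sq_le_sq_mul_sq Finset.univ
        (fun s : Fin S => Real.sqrt (lam s))
        (fun s : Fin S => Real.sqrt (lam s) * ‖gs s - u s‖)
      have e1 : ∀ s : Fin S, Real.sqrt (lam s) * (Real.sqrt (lam s) * ‖gs s - u s‖)
          = lam s * ‖gs s - u s‖ := fun s => by
        rw [← mul_assoc, Real.mul_self_sqrt (hlam_nonneg s)]
      have e2 : ∀ s : Fin S, Real.sqrt (lam s) ^ 2 = lam s := fun s =>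
        Real.sq_sqrt (hlam_nonneg s)
      have e3 : ∀ s : Fin S, (Real.sqrt (lam s) * ‖gs s - u s‖) ^ 2
          = lam s * ‖gs s - u s‖ ^ 2 := fun s => by
        rw [mul_pow, Real.sq_sqrt (hlam_nonneg s)]
      simp only [e1, e2, e3, hlam_sum, one_mul] at this
      exact this.trans_eq rfl
    have hB0 : 0 ≤ ∑ s : Fin S, lam s * ‖gs s - u s‖ :=
      Finset.sum_nonneg fun s _ => mul_nonneg (hlam_nonneg s) (norm_nonneg _)
    calc eps ^ 2 ≤ (∑ s : Fin S, lam s * ‖gs s - u s‖) ^ 2 := pow_le_pow_left₀ heps0 hB 2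
      _ ≤ Eerr := hCS
  have hEerr0 : 0 ≤ Eerr :=
    Finset.sum_nonneg fun s _ => mul_nonneg (hlam_nonneg s) (sq_nonneg _)
  -- combine into lower bound on T
  have hQlb : D ^ 2 - eps * D - L * η * D ^ 2 ≤ Q := by linarith
  have hηQ : η * (D ^ 2 - eps * D - L * η * D ^ 2) ≤ η * Q :=
    mul_le_mul_of_nonneg_left hQlb hη0.le
  have hTlb : η * D ^ 2 - η * (eps * D) - L * η ^ 2 * D ^ 2 + μ / 2 * η ^ 2 * D ^ 2
      + μ / 2 * r ^ 2 - eps * r ≤ T := by linarith [hA2, hA3, hA4, hA7, hηQ]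
  -- plug into eq1
  have hN : ‖x' - xstar‖ ^ 2 ≤ r ^ 2 - 2 * η * (η * D ^ 2 - η * (eps * D)
      - L * η ^ 2 * D ^ 2 + μ / 2 * η ^ 2 * D ^ 2 + μ / 2 * r ^ 2 - eps * r)
      + η ^ 2 * D ^ 2 := by
    rw [eq1]
    linarith [mul_le_mul_of_nonneg_left hTlb (by positivity : (0:ℝ) ≤ 2 * η)]
  clear_value gs hs g hvec r D eps Eerr T Q G2 Fx Fx' Fstar
  exact stimulus_key_arith μ L η r D eps Eerr _ hμ hη0 hLη hD0 hr0 heps0 hA8 hN
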